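/- Let X and U be real Hilbert spaces, t₁ > 0, (S(t))_{t∈[0,t₁]}, (T(t))_{t∈[0,t₁]} strongly continuous families of bounded operators on X, B : U → X a bounded linear operator, λ > 0, x₀, x₁ ∈ X, g a map from functions on [0,t₁] to X, and f, H as follows: f : [0,t₁] × X × X → X with s ↦ f(s, x̄(s), (Hx̄)(s)) Bochner integrable, where (Hx̄)(t) = ∫₀ᵗ h(t,s,x̄(s)) ds. Set Ψ = ∫₀^{t₁} T(t₁−s) B B* T(t₁−s)* ds, p = x₁ − S(t₁)(x₀ − g(x̄)) − ∫₀^{t₁} T(t₁−s) f(s, x̄(s), (Hx̄)(s)) ds, and ū(s) = B* T(t₁−s)* (λI + Ψ)^{-1} p. If x̄ satisfies x̄(t) = S(t)(x₀ − g(x̄)) + ∫₀ᵗ T(t−s)[f(s, x̄(s), (Hx̄)(s)) + Bū(s)] ds for all t ∈ [0,t₁], then x₁ − x̄(t₁) = λ(λI + Ψ)^{-1} p. -/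

import Mathlib

open MeasureTheory Filter
open scoped RealInnerProductSpace

/-- A strongly continuous, uniformly bounded operator family is jointly continuous. -/
lemma aux_joint_cont {X : Type*} [NormedAddCommGroup X] [NormedSpace ℝ X]
    (Tc : ℝ → X →L[ℝ] X) (M : ℝ)
    (hM : ∀ r, ‖Tc r‖ ≤ M)
    (hc : ∀ x : X, Continuous fun r => Tc r x) :
    Continuous fun q : ℝ × X => Tc q.1 q.2 := by
  rw [continuous_iff_continuousAt]
  rintro ⟨r₀, x₀⟩
  have key : ∀ q : ℝ × X, ‖Tc q.1 q.2 - Tc r₀ x₀‖ ≤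
      M * ‖q.2 - x₀‖ + ‖Tc q.1 x₀ - Tc r₀ x₀‖ := by
    intro q
    have hdec : Tc q.1 q.2 - Tc r₀ x₀ = Tc q.1 (q.2 - x₀) + (Tc q.1 x₀ - Tc r₀ x₀) := by
      rw [map_sub]; abel
    rw [hdec]
    refine (norm_add_le _ _).trans (add_le_add_left ?_ _)
    exact ((Tc q.1).le_opNorm _).trans
      (mul_le_mul_of_nonneg_right (hM _) (norm_nonneg _))
  have hg : Tendsto (fun q : ℝ × X => M * ‖q.2 - x₀‖ + ‖Tc q.1 x₀ - Tc r₀ x₀‖)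
      (nhds (r₀, x₀)) (nhds 0) := by
    have hcont : Continuous fun q : ℝ × X => M * ‖q.2 - x₀‖ + ‖Tc q.1 x₀ - Tc r₀ x₀‖ :=
      (continuous_const.mul ((continuous_snd.sub continuous_const).norm)).add
        ((((hc x₀).comp continuous_fst).sub continuous_const).norm)
    have := hcont.tendsto (r₀, x₀)
    simpa using this
  rw [ContinuousAt, tendsto_iff_norm_sub_tendsto_zero]
  exact squeeze_zero (fun q => norm_nonneg _) key hg

/-- A weakly continuous function into a real Hilbert space is strongly measurable. -/
lemma aux_wsm {X : Type*} [NormedAddCommGroup X] [InnerProductSpace ℝ X] [CompleteSpace X]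
    (v : ℝ → X) (hv : ∀ u : X, Continuous fun s => ⟪v s, u⟫) :
    StronglyMeasurable v := by
  classical
  -- a countable dense family of parameters
  let e : ℕ → ℚ := fun n => (Denumerable.eqv ℚ).symm n
  let q : ℕ → ℝ := fun n => ((e n : ℚ) : ℝ)
  have hq_dense : Dense (Set.range q) := by
    have h1 : Set.range q = Set.range (fun r : ℚ => (r : ℝ)) :=
      Function.Surjective.range_comp (Denumerable.eqv ℚ).symm.surjective _
    rw [h1]
    exact Rat.denseRange_cast
  set d : ℕ → X := fun n => v (q n) with hd
  set Y : Submodule ℝ X := (Submodule.span ℝ (Set.range d)).topologicalClosure with hY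
  haveI : CompleteSpace Y := (Submodule.isClosed_topologicalClosure _).completeSpace_coe
  have hdY : ∀ n, d n ∈ Y :=
    fun n => (Submodule.le_topologicalClosure _) (Submodule.subset_span ⟨n, rfl⟩)
  -- v takes values in Y
  have hvY : ∀ s, v s ∈ Y := by
    intro s
    rw [← Submodule.orthogonal_orthogonal Y, Submodule.mem_orthogonal]
    intro u hu
    have h0 : ∀ n, ⟪v (q n), u⟫ = 0 := fun n => (Submodule.mem_orthogonal Y u).mp hu _ (hdY n)
    have hfun : (fun s => ⟪v s, u⟫) = fun _ => (0 : ℝ) := by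
      apply Continuous.ext_on hq_dense (hv u) continuous_const
      rintro _ ⟨n, rfl⟩
      exact h0 n
    have : ⟪v s, u⟫ = 0 := congrFun hfun s
    rwa [real_inner_comm] at this
  -- finite-dimensional approximating subspaces
  set Yn : ℕ → Submodule ℝ X := fun n => Submodule.span ℝ (d '' Set.Iio n) with hYn
  haveI hfin : ∀ n, FiniteDimensional ℝ (Yn n) :=
    fun n => FiniteDimensional.span_of_finite ℝ ((Set.finite_Iio n).image d)
  set G : ℕ → ℝ → X := fun n s => (Submodule.orthogonalProjectionOnto (Yn n) (v s) : X) with hG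
  have hGcont : ∀ n, Continuous (G n) := by
    intro n
    let b := stdOrthonormalBasis ℝ (Yn n)
    have hrepr : ∀ x : X, (Submodule.orthogonalProjectionOnto (Yn n) x : X)
        = ∑ i, ⟪(b i : X), x⟫ • (b i : X) := by
      intro x
      rw [b.orthogonalProjectionOnto_apply_eq_sum]
      push_cast
      rfl
    have : G n = fun s => ∑ i, ⟪(b i : X), v s⟫ • (b i : X) := by
      funext s; exact hrepr (v s)
    rw [this]
    refine continuous_finset_sum _ fun i _ => Continuous.smul ?_ continuous_const
    have := hv (b i : X)
    simpa [real_inner_comm] using this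
  -- pointwise convergence
  have htend : ∀ s, Tendsto (fun n => G n s) atTop (nhds (v s)) := by
    intro s
    rw [Metric.tendsto_atTop]
    intro ε hε
    have hmem : v s ∈ closure ((Submodule.span ℝ (Set.range d) : Submodule ℝ X) : Set X) := by
      rw [← Submodule.topologicalClosure_coe]
      exact hvY s
    obtain ⟨w, hw_mem, hw_dist⟩ := Metric.mem_closure_iff.mp hmem ε hε
    obtain ⟨t, ht_sub, ht_mem⟩ := Submodule.mem_span_finite_of_mem_span hw_mem
    -- an index bound for the finite set t
    let idx : X → ℕ := fun x => if hx : x ∈ Set.range d then hx.choose else 0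
    set N : ℕ := t.sup idx + 1 with hN
    have ht_sub' : (t : Set X) ⊆ d '' Set.Iio N := by
      intro x hx
      have hxr : x ∈ Set.range d := ht_sub hx
      refine ⟨idx x, ?_, ?_⟩
      · exact lt_of_le_of_lt (Finset.le_sup hx) (Nat.lt_succ_self _)
      · simp only [idx, dif_pos hxr]
        exact hxr.choose_spec
    have hwN : w ∈ Yn N := Submodule.span_le.mpr
      (ht_sub'.trans Submodule.subset_span) ht_mem
    refine ⟨N, fun n hn => ?_⟩
    have hw_n : w ∈ Yn n :=
      Submodule.span_mono (Set.image_mono (Set.Iio_subset_Iio hn)) hwN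
    have hle : ‖v s - G n s‖ ≤ ‖v s - w‖ := by
      have hmin := Submodule.starProjection_minimal (U := Yn n) (v s)
      have hbdd : BddBelow (Set.range fun x : Yn n => ‖v s - x‖) :=
        ⟨0, by rintro _ ⟨x, rfl⟩; positivity⟩
      calc ‖v s - G n s‖ = ⨅ x : Yn n, ‖v s - x‖ := hmin
      _ ≤ ‖v s - (⟨w, hw_n⟩ : Yn n)‖ := ciInf_le hbdd ⟨w, hw_n⟩
      _ = ‖v s - w‖ := rfl
    calc dist (G n s) (v s) = ‖v s - G n s‖ := by rw [dist_comm, dist_eq_norm]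
    _ ≤ ‖v s - w‖ := hle
    _ = dist (v s) w := (dist_eq_norm _ _).symm
    _ < ε := hw_dist
  exact stronglyMeasurable_of_tendsto atTop (fun n => (hGcont n).stronglyMeasurable)
    (tendsto_pi_nhds.mpr htend)
theorem terminal_error_identity
    {X U : Type*}
    [NormedAddCommGroup X] [InnerProductSpace ℝ X] [CompleteSpace X]
    [NormedAddCommGroup U] [InnerProductSpace ℝ U] [CompleteSpace U]
    (t₁ : ℝ) (ht₁ : 0 < t₁)
    (S T : ℝ → X →L[ℝ] X)
    (hS_cont : ∀ z : X, ContinuousOn (fun t => S t z) (Set.Icc (0:ℝ) t₁))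
    (hT_cont : ∀ z : X, ContinuousOn (fun t => T t z) (Set.Icc (0:ℝ) t₁))
    (B : U →L[ℝ] X)
    (l : ℝ) (hl : 0 < l) (x₀ x₁ : X)
    (g : (ℝ → X) → X)
    (f : ℝ → X → X → X) (h : ℝ → ℝ → X → X)
    (xbar : ℝ → X)
    (hf_int : IntervalIntegrable
      (fun s => f s (xbar s) (∫ σ in (0:ℝ)..s, h s σ (xbar σ))) volume 0 t₁)
    -- the controllability Gramian Ψ and its resolvent R = (λI + Ψ)⁻¹
    (Ψ : X →L[ℝ] X)
    (hΨ : ∀ z : X, Ψ z = ∫ s in (0:ℝ)..t₁,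
      T (t₁ - s) (B ((ContinuousLinearMap.adjoint B)
        ((ContinuousLinearMap.adjoint (T (t₁ - s))) z))))
    (R : X →L[ℝ] X)
    (hR₁ : (l • ContinuousLinearMap.id ℝ X + Ψ).comp R = ContinuousLinearMap.id ℝ X)
    (hR₂ : R.comp (l • ContinuousLinearMap.id ℝ X + Ψ) = ContinuousLinearMap.id ℝ X)
    -- the data p, the feedback control ū, and the mild solution equation
    (p : X)
    (hp : p = x₁ - S t₁ (x₀ - g xbar)
      - ∫ s in (0:ℝ)..t₁, T (t₁ - s) (f s (xbar s) (∫ σ in (0:ℝ)..s, h s σ (xbar σ))))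
    (ubar : ℝ → U)
    (hu : ∀ s : ℝ, ubar s = (ContinuousLinearMap.adjoint B)
      ((ContinuousLinearMap.adjoint (T (t₁ - s))) (R p)))
    (hmild : ∀ t ∈ Set.Icc (0:ℝ) t₁,
      xbar t = S t (x₀ - g xbar) + ∫ s in (0:ℝ)..t,
        T (t - s) (f s (xbar s) (∫ σ in (0:ℝ)..s, h s σ (xbar σ)) + B (ubar s))) :
    x₁ - xbar t₁ = l • R p := by
  classical
  have ht₁' : (0:ℝ) ≤ t₁ := ht₁.le
  set a : X := x₀ - g xbar with ha
  set φ : ℝ → X := fun s => f s (xbar s) (∫ σ in (0:ℝ)..s, h s σ (xbar σ)) with hφdef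
  set z : X := R p with hz
  -- the clamped operator family
  set c : ℝ → ℝ := fun r => min t₁ (max 0 r) with hcdef
  have hc_cont : Continuous c := continuous_const.min (continuous_const.max continuous_id)
  have hc_mem : ∀ r, c r ∈ Set.Icc (0:ℝ) t₁ :=
    fun r => ⟨le_min ht₁' (le_max_left _ _), min_le_left _ _⟩
  have hc_id : ∀ r ∈ Set.Icc (0:ℝ) t₁, c r = r := by
    intro r hr
    simp only [hcdef]
    rw [max_eq_right hr.1, min_eq_right hr.2]
  set Tc : ℝ → X →L[ℝ] X := fun r => T (c r) with hTcdef
  have hTc_cont : ∀ x : X, Continuous fun r => Tc r x := fun x =>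
    (hT_cont x).comp_continuous hc_cont hc_mem
  obtain ⟨M₀, hM₀⟩ : ∃ C, ∀ r, ‖Tc r‖ ≤ C := by
    apply banach_steinhaus
    intro x
    obtain ⟨C, hC⟩ := isCompact_Icc.exists_bound_of_continuousOn (hT_cont x)
    exact ⟨C, fun r => hC _ (hc_mem r)⟩
  set M : ℝ := max M₀ 0 with hMdef
  have hMnn : (0:ℝ) ≤ M := le_max_right _ _
  have hM' : ∀ r, ‖Tc r‖ ≤ M := fun r => le_max_of_le_left (hM₀ r)
  have jc : Continuous fun q : ℝ × X => Tc q.1 q.2 := aux_joint_cont Tc M hM' hTc_cont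
  -- the adjoint-family applied to z
  set v : ℝ → X := fun r => ContinuousLinearMap.adjoint (Tc r) z with hvdef
  have hv_meas : StronglyMeasurable v := by
    apply aux_wsm
    intro u
    have hfun : (fun r => ⟪v r, u⟫) = fun r => ⟪z, Tc r u⟫ := by
      funext r
      exact ContinuousLinearMap.adjoint_inner_left (Tc r) u z
    rw [hfun]
    exact continuous_const.inner (hTc_cont u)
  have hadj_norm : ∀ r, ‖ContinuousLinearMap.adjoint (Tc r)‖ ≤ M := by
    intro r
    rw [LinearIsometryEquiv.norm_map]
    exact hM' r
  have hv_bound : ∀ r, ‖v r‖ ≤ M * ‖z‖ := by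
    intro r
    exact ((ContinuousLinearMap.adjoint (Tc r)).le_opNorm z).trans
      (mul_le_mul_of_nonneg_right (hadj_norm r) (norm_nonneg _))
  -- the control integrand, in clamped form
  set Fv : ℝ → X := fun s => Tc (t₁ - s) (B (ContinuousLinearMap.adjoint B (v (t₁ - s)))) with hFvdef
  have hFv_meas : StronglyMeasurable Fv := by
    have h1 : StronglyMeasurable fun s : ℝ => v (t₁ - s) :=
      hv_meas.comp_measurable (measurable_const.sub measurable_id)
    have h2 : StronglyMeasurable fun s : ℝ => B (ContinuousLinearMap.adjoint B (v (t₁ - s))) :=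
      (B.continuous.comp (ContinuousLinearMap.adjoint B).continuous).comp_stronglyMeasurable h1
    exact jc.comp_stronglyMeasurable
      (((continuous_const.sub continuous_id).stronglyMeasurable).prodMk h2)
  have hBad : ‖ContinuousLinearMap.adjoint B‖ = ‖B‖ := LinearIsometryEquiv.norm_map _ _
  have hFv_bound : ∀ s, ‖Fv s‖ ≤ M * (‖B‖ * (‖B‖ * (M * ‖z‖))) := by
    intro s
    have b3 : ‖ContinuousLinearMap.adjoint B (v (t₁ - s))‖ ≤ ‖B‖ * (M * ‖z‖) := by
      refine ((ContinuousLinearMap.adjoint B).le_opNorm _).trans ?_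
      rw [hBad]
      exact mul_le_mul_of_nonneg_left (hv_bound _) (norm_nonneg _)
    have b2 : ‖B (ContinuousLinearMap.adjoint B (v (t₁ - s)))‖ ≤ ‖B‖ * (‖B‖ * (M * ‖z‖)) :=
      (B.le_opNorm _).trans (mul_le_mul_of_nonneg_left b3 (norm_nonneg _))
    exact ((Tc (t₁ - s)).le_opNorm _).trans
      (mul_le_mul (hM' _) b2 (norm_nonneg _) hMnn)
  have hFv_int : IntervalIntegrable Fv volume 0 t₁ :=
    (intervalIntegrable_const (c := M * (‖B‖ * (‖B‖ * (M * ‖z‖))))).mono_fun'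
      hFv_meas.aestronglyMeasurable (Filter.Eventually.of_forall hFv_bound)
  -- identification on the interval
  have hTcEq : ∀ s ∈ Set.uIcc (0:ℝ) t₁, Tc (t₁ - s) = T (t₁ - s) := by
    intro s hs
    rw [Set.uIcc_of_le ht₁'] at hs
    have hmem : t₁ - s ∈ Set.Icc (0:ℝ) t₁ := ⟨by linarith [hs.2], by linarith [hs.1]⟩
    simp only [hTcdef]
    rw [hc_id _ hmem]
  have hFvG : Set.EqOn Fv (fun s => T (t₁ - s) (B (ubar s))) (Set.uIcc (0:ℝ) t₁) := by
    intro s hs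
    have h1 := hTcEq s hs
    simp only [hFvdef, hvdef, hu s, h1, hz]
  have hG_int : IntervalIntegrable (fun s => T (t₁ - s) (B (ubar s))) volume 0 t₁ := by
    rw [intervalIntegrable_iff] at hFv_int ⊢
    refine hFv_int.congr_fun (fun s hs => ?_) measurableSet_uIoc
    rw [Set.uIoc_of_le ht₁'] at hs
    refine hFvG ?_
    rw [Set.uIcc_of_le ht₁']
    exact Set.Ioc_subset_Icc_self hs
  -- Gramian identity
  have hΨz : Ψ z = ∫ s in (0:ℝ)..t₁, T (t₁ - s) (B (ubar s)) := by
    rw [hΨ z]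
    apply intervalIntegral.integral_congr
    intro s _
    simp only [hu]
  -- the f-part integrand
  have hφ_on : IntegrableOn φ (Set.Ioc 0 t₁) volume := by
    rw [← intervalIntegrable_iff_integrableOn_Ioc_of_le ht₁']
    exact hf_int
  have hΦ_meas : AEStronglyMeasurable (fun s => Tc (t₁ - s) (φ s))
      (volume.restrict (Set.Ioc 0 t₁)) :=
    jc.comp_aestronglyMeasurable
      (((continuous_const.sub continuous_id).aestronglyMeasurable).prodMk
        hφ_on.aestronglyMeasurable)
  have hΦ_int : IntegrableOn (fun s => Tc (t₁ - s) (φ s)) (Set.Ioc 0 t₁) volume := by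
    refine Integrable.mono' (hφ_on.norm.const_mul M) hΦ_meas ?_
    refine Filter.Eventually.of_forall fun s => ?_
    exact ((Tc (t₁ - s)).le_opNorm (φ s)).trans
      (mul_le_mul_of_nonneg_right (hM' _) (norm_nonneg _))
  have hG1_int : IntervalIntegrable (fun s => T (t₁ - s) (φ s)) volume 0 t₁ := by
    rw [intervalIntegrable_iff_integrableOn_Ioc_of_le ht₁']
    refine hΦ_int.congr_fun (fun s hs => ?_) measurableSet_Ioc
    beta_reduce
    rw [hTcEq s (by rw [Set.uIcc_of_le ht₁']; exact Set.Ioc_subset_Icc_self hs)]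
  -- split the mild-solution integral
  have hmild₁ := hmild t₁ ⟨ht₁', le_refl t₁⟩
  simp only [map_add] at hmild₁
  rw [intervalIntegral.integral_add hG1_int hG_int] at hmild₁
  -- final algebra
  have hRp : l • R p + Ψ (R p) = p := by
    have hcongr := congrArg (fun A : X →L[ℝ] X => A p) hR₁
    simpa using hcongr
  rw [← hz] at hRp
  have hp' : p = x₁ - S t₁ a - ∫ s in (0:ℝ)..t₁, T (t₁ - s) (φ s) := hp
  rw [hmild₁, ← hΨz, eq_sub_of_add_eq hRp, hp']
  abel
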